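/- Suppose m, μ ≥ 1 are integers, p, q ∈ (0,∞), and the intersection 𝔄̂_{m,p} ∩ 𝔄̂_{μ,q} is nonempty. Then (m-1)·q = (μ-1)·p. -/

import Mathlib

open Filter Finset Function

/-- The `m`-th iterated forward difference of a real sequence, evaluated at `n`:
`(D^m a)_n = ∑_{k=0}^{m} (-1)^k (m choose k) a_{n+k}`. -/
def Dseq (a : ℕ → ℝ) (m n : ℕ) : ℝ :=
  ∑ k ∈ Finset.range (m + 1), (-1 : ℝ) ^ k * (m.choose k : ℝ) * a (n + k)

/-- `a ∈ 𝔄_{m,p}`: a nonnegative sequence with `D^m (a^p) = 0`. -/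
def MemA (a : ℕ → ℝ) (m : ℕ) (p : ℝ) : Prop :=
  (∀ n, 0 ≤ a n) ∧ ∀ n, Dseq (fun j => a j ^ p) m n = 0

/-- `a ∈ 𝔄̂_{m,p}`: `a ∈ 𝔄_{m,p}` and `D^{m-1} (a^p) ≠ 0`. -/
def MemAhat (a : ℕ → ℝ) (m : ℕ) (p : ℝ) : Prop :=
  MemA a m p ∧ ¬ ∀ n, Dseq (fun j => a j ^ p) (m - 1) n = 0

/-- `Dseq` equals `(-1)^m` times the iterated forward difference. -/
lemma fwdDiff_eq_dseq (b : ℕ → ℝ) (m n : ℕ) :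
    (fwdDiff (1 : ℕ))^[m] b n = (-1 : ℝ) ^ m * Dseq b m n := by
  rw [fwdDiff_iter_eq_sum_shift, Dseq, Finset.mul_sum]
  refine Finset.sum_congr rfl fun k hk => ?_
  have hk' : k ≤ m := Nat.lt_succ_iff.mp (Finset.mem_range.mp hk)
  have hsign : ((-1 : ℝ) ^ (m - k)) = (-1) ^ m * (-1) ^ k := by
    have h1 : (-1 : ℝ) ^ (m - k) = (-1) ^ (m - k) * ((-1) ^ 2) ^ k := by
      norm_num
    rw [h1, ← pow_mul, ← pow_add]
    have : m - k + 2 * k = m + k := by omega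
    rw [this, pow_add]
  have : ((-1 : ℤ) ^ (m - k) * (m.choose k : ℤ)) • b (n + k • 1) =
      ((-1 : ℝ) ^ (m - k) * (m.choose k : ℝ)) * b (n + k) := by
    rw [zsmul_eq_mul]
    push_cast
    ring_nf
  rw [this, hsign]
  ring

lemma dseq_zero_iff (b : ℕ → ℝ) (m : ℕ) :
    (∀ n, Dseq b m n = 0) ↔ ∀ n, (fwdDiff (1 : ℕ))^[m] b n = 0 := by
  constructor <;> intro h n <;> have := fwdDiff_eq_dseq b m n
  · rw [this, h n, mul_zero]
  · have h0 := h n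
    rw [this] at h0
    have : ((-1 : ℝ) ^ m) ≠ 0 := by positivity
    exact (mul_eq_zero.mp h0).resolve_left this

/-- Iterates beyond a vanishing level vanish. -/
lemma iter_vanish (b : ℕ → ℝ) (m : ℕ) (h0 : ∀ n, (fwdDiff (1 : ℕ))^[m] b n = 0)
    (k : ℕ) (hk : m ≤ k) : ∀ n, (fwdDiff (1 : ℕ))^[k] b n = 0 := by
  obtain ⟨j, rfl⟩ := Nat.exists_eq_add_of_le hk
  have hb : (fwdDiff (1 : ℕ))^[m] b = fun _ => 0 := funext h0
  intro n
  rw [add_comm, Function.iterate_add_apply, hb]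
  clear h0 hb hk
  induction j with
  | zero => rfl
  | succ j ih =>
      rw [Function.iterate_succ_apply]
      have : fwdDiff (1 : ℕ) (fun _ => (0:ℝ)) = fun _ => 0 := by
        funext x; simp [fwdDiff]
      rw [this]; exact ih

/-- The `(m-1)`-st difference is constant when the `m`-th vanishes. -/
lemma iter_const (b : ℕ → ℝ) (m : ℕ) (hm : 1 ≤ m)
    (h0 : ∀ n, (fwdDiff (1 : ℕ))^[m] b n = 0) (n : ℕ) :
    (fwdDiff (1 : ℕ))^[m - 1] b n = (fwdDiff (1 : ℕ))^[m - 1] b 0 := by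
  induction n with
  | zero => rfl
  | succ n ih =>
      have h := h0 n
      have hm' : m - 1 + 1 = m := by omega
      rw [← hm', Function.iterate_succ_apply'] at h
      simp only [fwdDiff] at h
      have : (fwdDiff (1:ℕ))^[m-1] b (n + 1) = (fwdDiff (1:ℕ))^[m-1] b n := by
        linarith
      rw [this, ih]

lemma tendsto_choose_div_pow (k : ℕ) :
    Tendsto (fun n : ℕ => (n.choose k : ℝ) / (n : ℝ) ^ k) atTop
      (nhds (1 / (k.factorial : ℝ))) := by
  have hmain : Tendsto (fun n : ℕ => (∏ i ∈ range k, (1 - (i : ℝ) / n)) / (k.factorial : ℝ))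
      atTop (nhds (1 / (k.factorial : ℝ))) := by
    have hprod : Tendsto (fun n : ℕ => ∏ i ∈ range k, (1 - (i : ℝ) / n)) atTop
        (nhds (∏ _i ∈ range k, (1:ℝ))) := by
      refine tendsto_finset_prod _ fun i _ => ?_
      have := tendsto_const_div_atTop_nhds_zero_nat (i : ℝ)
      have h2 : Tendsto (fun n : ℕ => 1 - (i:ℝ)/n) atTop (nhds (1 - 0)) :=
        tendsto_const_nhds.sub this
      simpa using h2
    simp only [Finset.prod_const_one] at hprod
    exact hprod.div_const _
  refine hmain.congr' ?_
  filter_upwards [eventually_ge_atTop k, eventually_ge_atTop 1] with n hn h1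
  have hn0 : (0:ℝ) < (n:ℝ) := by exact_mod_cast h1
  have hdesc : (n.descFactorial k : ℝ) = ∏ i ∈ range k, ((n:ℝ) - i) := by
    rw [Nat.descFactorial_eq_prod_range]
    push_cast
    refine Finset.prod_congr rfl fun i hi => ?_
    have : i ≤ n := le_trans (le_of_lt (Finset.mem_range.mp hi)) hn
    rw [Nat.cast_sub this]
  have hchoose : (n.choose k : ℝ) = (∏ i ∈ range k, ((n:ℝ) - i)) / (k.factorial : ℝ) := by
    rw [← hdesc, Nat.descFactorial_eq_factorial_mul_choose]
    push_cast
    rw [mul_comm, mul_div_assoc, div_self (by positivity), mul_one]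
  rw [eq_comm, hchoose, div_div]
  have hpr : (∏ i ∈ range k, (1 - (i:ℝ)/n)) = (∏ i ∈ range k, ((n:ℝ) - i)) / (n:ℝ)^k := by
    calc (∏ i ∈ range k, (1 - (i:ℝ)/n)) = ∏ i ∈ range k, (((n:ℝ) - i) / n) :=
          Finset.prod_congr rfl fun i _ => by rw [sub_div, div_self hn0.ne']
      _ = (∏ i ∈ range k, ((n:ℝ) - i)) / (∏ _i ∈ range k, (n:ℝ)) := Finset.prod_div_distrib _ _
      _ = (∏ i ∈ range k, ((n:ℝ) - i)) / (n:ℝ)^k := by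
          rw [Finset.prod_const, Finset.card_range]
  rw [hpr, div_div, mul_comm ((k.factorial:ℝ))]

lemma tendsto_choose_div_pow_zero (k K : ℕ) (hk : k < K) :
    Tendsto (fun n : ℕ => (n.choose k : ℝ) / (n : ℝ) ^ K) atTop (nhds 0) := by
  have h1 : Tendsto (fun n : ℕ => (n.choose k : ℝ) / (n : ℝ) ^ k) atTop
      (nhds (1 / (k.factorial : ℝ))) := tendsto_choose_div_pow k
  have h2 : Tendsto (fun n : ℕ => (1:ℝ) / (n : ℝ) ^ (K - k)) atTop (nhds 0) := by
    have hKk : K - k ≠ 0 := by omega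
    have hpow : Tendsto (fun n : ℕ => (n : ℝ) ^ (K - k)) atTop atTop :=
      (tendsto_pow_atTop hKk).comp tendsto_natCast_atTop_atTop
    simpa only [one_div, Pi.inv_def] using hpow.inv_tendsto_atTop
  have h3 := h1.mul h2
  simp only [mul_zero] at h3
  refine h3.congr' ?_
  filter_upwards [eventually_ge_atTop 1] with n h1n
  have hn0 : (0:ℝ) < (n:ℝ) := by exact_mod_cast h1n
  have hKk : (n:ℝ) ^ K = (n:ℝ) ^ k * (n:ℝ) ^ (K - k) := by
    rw [← pow_add]; congr 1; omega
  rw [hKk]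
  field_simp

/-- If the `m`-th difference of `b` vanishes, `b n / n^(m-1)` converges. -/
lemma key_tendsto (b : ℕ → ℝ) (m : ℕ) (hm : 1 ≤ m)
    (h0 : ∀ n, (fwdDiff (1:ℕ))^[m] b n = 0) :
    Tendsto (fun n : ℕ => b n / (n:ℝ)^(m-1)) atTop
      (nhds ((fwdDiff (1:ℕ))^[m-1] b 0 / ((m-1).factorial : ℝ))) := by
  set d : ℕ → ℝ := fun k => (fwdDiff (1:ℕ))^[k] b 0 with hd
  have hsum : Tendsto (fun n : ℕ => ∑ k ∈ range m, d k * ((n.choose k : ℝ) / (n:ℝ)^(m-1)))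
      atTop (nhds (∑ k ∈ range m, d k * (if k = m-1 then 1/(((m-1).factorial:ℝ)) else 0))) := by
    refine tendsto_finset_sum _ fun k hk => ?_
    rcases eq_or_ne k (m-1) with h | h
    · subst h; simp only [if_pos rfl]
      exact (tendsto_choose_div_pow (m-1)).const_mul _
    · have hklt : k < m - 1 := by have := Finset.mem_range.mp hk; omega
      simp only [if_neg h]
      have := (tendsto_choose_div_pow_zero k (m-1) hklt).const_mul (d k)
      simpa using this
  have hval : (∑ k ∈ range m, d k * (if k = m-1 then 1/(((m-1).factorial:ℝ)) else 0))
      = d (m-1) / ((m-1).factorial : ℝ) := by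
    rw [Finset.sum_eq_single (m-1)]
    · rw [if_pos rfl]; ring
    · intro k _ hk; rw [if_neg hk, mul_zero]
    · intro h; exact absurd (Finset.mem_range.mpr (by omega)) h
  rw [hval] at hsum
  refine hsum.congr' ?_
  filter_upwards [eventually_ge_atTop (m-1)] with n hn
  have hNewton : b n = ∑ k ∈ range (n+1), (n.choose k : ℝ) * d k := by
    have h := shift_eq_sum_fwdDiff_iter (1:ℕ) b n 0
    simp only [zero_add, smul_eq_mul, mul_one] at h
    rw [h]
    exact Finset.sum_congr rfl fun k _ => by rw [nsmul_eq_mul]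
  have htrunc : ∑ k ∈ range (n+1), (n.choose k : ℝ) * d k
      = ∑ k ∈ range m, (n.choose k : ℝ) * d k := by
    refine (Finset.sum_subset (Finset.range_subset_range.mpr (by omega)) fun k _ hk => ?_).symm
    have hmk : m ≤ k := by
      by_contra h; exact hk (Finset.mem_range.mpr (by omega))
    have : d k = 0 := iter_vanish b m h0 k hmk 0
    rw [this, mul_zero]
  rw [hNewton, htrunc, Finset.sum_div]
  exact Finset.sum_congr rfl fun k _ => by ring

lemma rpow_exponent_zero {e c : ℝ} (hc : 0 < c)
    (h : Tendsto (fun n : ℕ => (n:ℝ) ^ e) atTop (nhds c)) : e = 0 := by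
  by_contra he
  rcases lt_or_gt_of_ne he with hlt | hgt
  · have h2 : Tendsto (fun n : ℕ => (n:ℝ) ^ e) atTop (nhds 0) := by
      have := (tendsto_rpow_neg_atTop (y := -e) (by linarith)).comp
        tendsto_natCast_atTop_atTop
      simpa [neg_neg, Function.comp_def] using this
    exact absurd (tendsto_nhds_unique h h2) (ne_of_gt hc)
  · have h2 : Tendsto (fun n : ℕ => (n:ℝ) ^ e) atTop atTop :=
      (tendsto_rpow_atTop hgt).comp tendsto_natCast_atTop_atTop
    exact not_tendsto_nhds_of_tendsto_atTop h2 c h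

/-- Package: for `a ∈ 𝔄̂_{m,p}` the sequence `a^p / n^(m-1)` has a positive limit. -/
lemma main_limit (a : ℕ → ℝ) (m : ℕ) (hm : 1 ≤ m) (p : ℝ) (h : MemAhat a m p) :
    ∃ L : ℝ, 0 < L ∧
      Tendsto (fun n : ℕ => (a n ^ p) / (n:ℝ) ^ (((m-1 : ℕ)):ℝ)) atTop (nhds L) := by
  obtain ⟨⟨ha, hD⟩, hD'⟩ := h
  set b : ℕ → ℝ := fun j => a j ^ p with hb
  have h0 : ∀ n, (fwdDiff (1:ℕ))^[m] b n = 0 := (dseq_zero_iff b m).mp hD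
  have hT := key_tendsto b m hm h0
  set L : ℝ := (fwdDiff (1:ℕ))^[m-1] b 0 / ((m-1).factorial : ℝ) with hL
  have hLne : L ≠ 0 := by
    push_neg at hD'
    obtain ⟨n, hn⟩ := hD'
    have h1 : (fwdDiff (1:ℕ))^[m-1] b n ≠ 0 := by
      rw [fwdDiff_eq_dseq]
      exact mul_ne_zero (by positivity) hn
    rw [iter_const b m hm h0 n] at h1
    exact div_ne_zero h1 (by positivity)
  have hLnn : 0 ≤ L := by
    refine ge_of_tendsto' hT fun n => ?_
    exact div_nonneg (Real.rpow_nonneg (ha n) p) (by positivity)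
  refine ⟨L, lt_of_le_of_ne hLnn (Ne.symm hLne), ?_⟩
  refine hT.congr fun n => ?_
  rw [Real.rpow_natCast]

theorem stmt_7 (m μ : ℕ) (hm : 1 ≤ m) (hμ : 1 ≤ μ) (p q : ℝ) (hp : 0 < p) (hq : 0 < q)
    (a : ℕ → ℝ) (h₁ : MemAhat a m p) (h₂ : MemAhat a μ q) :
    ((m - 1 : ℕ) : ℝ) * q = ((μ - 1 : ℕ) : ℝ) * p := by
  have ha : ∀ n, 0 ≤ a n := h₁.1.1
  obtain ⟨L, hLpos, hTb⟩ := main_limit a m hm p h₁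
  obtain ⟨K, hKpos, hTc⟩ := main_limit a μ hμ q h₂
  set α : ℝ := ((m - 1 : ℕ) : ℝ)
  set β : ℝ := ((μ - 1 : ℕ) : ℝ)
  set γ : ℝ := α * (q / p)
  -- limit of a^q / n^γ
  have hqp : 0 < q / p := div_pos hq hp
  have T1 : Tendsto (fun n : ℕ => (a n ^ q) / (n:ℝ) ^ γ) atTop (nhds (L ^ (q/p))) := by
    have := hTb.rpow_const (p := q/p) (Or.inr hqp.le)
    refine this.congr fun n => ?_
    rw [Real.div_rpow (Real.rpow_nonneg (ha n) p) (Real.rpow_nonneg (Nat.cast_nonneg n) α)]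
    congr 1
    · rw [← Real.rpow_mul (ha n)]
      congr 1
      field_simp
    · rw [← Real.rpow_mul (Nat.cast_nonneg n)]
  have hLq : 0 < L ^ (q/p) := Real.rpow_pos_of_pos hLpos _
  -- eventually a n ^ q > 0
  have hev : ∀ᶠ n : ℕ in atTop, 0 < a n ^ q := by
    have h1 : ∀ᶠ n : ℕ in atTop, 0 < (a n ^ q) / (n:ℝ) ^ β :=
      hTc.eventually (eventually_gt_nhds hKpos)
    filter_upwards [h1, eventually_ge_atTop 1] with n hn h1n
    have hn0 : (0:ℝ) < (n:ℝ) := by exact_mod_cast h1n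
    have hβ : (0:ℝ) < (n:ℝ) ^ β := Real.rpow_pos_of_pos hn0 β
    rcases div_pos_iff.mp hn with ⟨h, _⟩ | ⟨_, h⟩
    · exact h
    · exact absurd hβ (not_lt.mpr h.le)
  have T3 := hTc.div T1 (ne_of_gt hLq)
  have T4 : Tendsto (fun n : ℕ => (n:ℝ) ^ (γ - β)) atTop (nhds (K / L ^ (q/p))) := by
    refine T3.congr' ?_
    filter_upwards [hev, eventually_ge_atTop 1] with n hc h1n
    have hn0 : (0:ℝ) < (n:ℝ) := by exact_mod_cast h1n
    simp only [Pi.div_apply]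
    rw [div_div_div_comm, div_self (ne_of_gt hc), one_div_div, Real.rpow_sub hn0]
  have hzero : γ - β = 0 := rpow_exponent_zero (div_pos hKpos hLq) T4
  have hγβ : α * (q/p) = β := sub_eq_zero.mp hzero
  have : α * q = β * p := by
    field_simp at hγβ
    linarith [hγβ]
  exact this
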